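/- Let R be a regular family of finite subsets of ℕ. Then for every infinite subset L of ℕ, the order of the restricted family R↾L equals the order of R, i.e. o(R↾L) = o(R). -/

import Mathlib

open Set Filter

namespace HOSM

/-- `t` is an initial segment of the finite set `s` (w.r.t. the increasing enumerations). -/
def InitSeg (t s : Finset ℕ) : Prop :=
  t ⊆ s ∧ ∀ a ∈ s, ∀ b ∈ t, a ≤ b → a ∈ t

/-- `t` is a proper initial segment of `s`. -/
def ProperInitSeg (t s : Finset ℕ) : Prop := InitSeg t s ∧ t ≠ s

/-- The initial-segment closure `F̂` of a family `F`. -/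
def hat (F : Set (Finset ℕ)) : Set (Finset ℕ) := {t | ∃ s ∈ F, InitSeg t s}

/-- The restriction `F↾L = {s ∈ F : s ⊆ L}`. -/
def restrict (F : Set (Finset ℕ)) (L : Set ℕ) : Set (Finset ℕ) :=
  {s | s ∈ F ∧ (s : Set ℕ) ⊆ L}

/-- `F` is hereditary: it contains all subsets of its members. -/
def Hereditary (F : Set (Finset ℕ)) : Prop := ∀ s ∈ F, ∀ t ⊆ s, t ∈ F

/-- `elt s k` is the `k`-th smallest element of `s` (0-indexed; junk value `0` out of range). -/
def elt (s : Finset ℕ) (k : ℕ) : ℕ := (s.sort (· ≤ ·)).getD k 0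

/-- `F` is spreading. -/
def Spreading (F : Set (Finset ℕ)) : Prop :=
  ∀ s ∈ F, ∀ t : Finset ℕ, t.card = s.card → (∀ k < s.card, elt s k ≤ elt t k) → t ∈ F

/-- The characteristic function of a finite set, as an element of `{0,1}^ℕ`. -/
def chi (s : Finset ℕ) : ℕ → Bool := fun n => decide (n ∈ s)

/-- `F` is compact: the set of characteristic functions of its members is closed in `{0,1}^ℕ`. -/
def CompactFam (F : Set (Finset ℕ)) : Prop := IsClosed (chi '' F)

/-- `F` is regular: compact, hereditary and spreading. -/
def RegularFam (F : Set (Finset ℕ)) : Prop := CompactFam F ∧ Hereditary F ∧ Spreading F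

/-- `F` is thin: no member is a proper initial segment of another member. -/
def Thin (F : Set (Finset ℕ)) : Prop := ∀ s ∈ F, ∀ t ∈ F, ¬ ProperInitSeg t s

/-- `F` is regular thin: thin, and its closure `F̂` is regular. -/
def RegularThin (F : Set (Finset ℕ)) : Prop := Thin F ∧ RegularFam (hat F)

/-- The relation on finite sets: `extRel F t s` iff `t ∈ F̂` and `s` is a proper initial
segment of `t`.  Rank with respect to it computes the order `o_{F̂}`. -/
def extRel (F : Set (Finset ℕ)) (t s : Finset ℕ) : Prop := t ∈ hat F ∧ ProperInitSeg s t

open scoped Classical in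
/-- The order `o(F)` of a family: the ordinal rank of the tree `F̂` at `∅`
(junk value `0` if `F̂` is ill-founded). -/
noncomputable def famOrder (F : Set (Finset ℕ)) : Ordinal :=
  if h : Acc (extRel F) (∅ : Finset ℕ) then h.rank else 0

/-- `nth L k` is the `k`-th smallest element of the set `L` (0-indexed). -/
noncomputable def nth (L : Set ℕ) (k : ℕ) : ℕ := Nat.nth (· ∈ L) k

/-- `L(s) = {L(k) : k ∈ s}` for a finite set `s`. -/
noncomputable def mapSet (L : Set ℕ) (s : Finset ℕ) : Finset ℕ := s.image (nth L)

/-- An `l`-tuple of nonempty finite subsets of `ℕ` is a plegma family. -/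
def IsPlegma {l : ℕ} (s : Fin l → Finset ℕ) : Prop :=
  (∀ i, (s i).Nonempty) ∧
  (∀ i j : Fin l, i < j → ∀ k, k < (s i).card → k < (s j).card →
      elt (s i) k < elt (s j) k) ∧
  (∀ i j : Fin l, ∀ k, k < (s i).card → k + 1 < (s j).card →
      elt (s i) k < elt (s j) (k + 1))

/-- A plegma pair. -/
def IsPlegmaPair (s t : Finset ℕ) : Prop := IsPlegma ![s, t]

/-- `Plm l G`: the set of plegma `l`-tuples with members in `G`. -/
def Plm (l : ℕ) (G : Set (Finset ℕ)) : Set (Fin l → Finset ℕ) :=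
  {s | IsPlegma s ∧ ∀ i, s i ∈ G}

/-- `s` is an initial segment of the infinite set `N`. -/
def InitSegOfInf (s : Finset ℕ) (N : Set ℕ) : Prop :=
  (s : Set ℕ) ⊆ N ∧ ∀ a ∈ N, ∀ b ∈ s, a ≤ b → a ∈ s

/-- `F` is very large in `M`: every infinite subset of `M` has an initial segment in `F`. -/
def VeryLarge (F : Set (Finset ℕ)) (M : Set ℕ) : Prop :=
  ∀ N : Set ℕ, N ⊆ M → N.Infinite → ∃ s ∈ F, InitSegOfInf s N

/-- `F↾↾L`. -/
def restrict2 (F : Set (Finset ℕ)) (L : Set ℕ) : Set (Finset ℕ) :=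
  {s | s ∈ restrict F L ∧ ∀ j, j + 1 < s.card → ∃ l ∈ L, elt s j < l ∧ l < elt s (j + 1)}

/-- `φ` is plegma preserving on `D`. -/
def PlegmaPreserving (D : Set (Finset ℕ)) (φ : Finset ℕ → Finset ℕ) : Prop :=
  ∀ s₁ ∈ D, ∀ s₂ ∈ D, IsPlegmaPair s₁ s₂ → IsPlegmaPair (φ s₁) (φ s₂)

end HOSM

open HOSM

section RankAux

variable {α : Type*} {r r' : α → α → Prop} {f : α → α}

theorem acc_of_map (hf : ∀ a b, r a b → r' (f a) (f b)) {a : α} (h' : Acc r' (f a)) : Acc r a :=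
  Subrelation.accessible (fun h => hf _ _ h) (InvImage.accessible f h')

theorem rank_le_of_map (hf : ∀ a b, r a b → r' (f a) (f b)) :
    ∀ {a : α} (ha : Acc r a) {c : α} (_ : f a = c) (hb : Acc r' c), ha.rank ≤ hb.rank := by
  intro a ha
  induction ha with
  | intro a h ih =>
    intro c hc hb
    rw [Acc.rank_eq]
    apply Ordinal.iSup_le
    rintro ⟨b, hba⟩
    have hr' : r' (f b) c := hc ▸ hf _ _ hba
    have h1 : (h b hba).rank ≤ (hb.inv hr').rank := ih b hba rfl (hb.inv hr')
    exact Order.succ_le_of_lt (h1.trans_lt (hb.rank_lt_of_rel hr'))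

end RankAux


section Comb

variable {L : Set ℕ} (hL : L.Infinite)
include hL

theorem nth_strictMono'' : StrictMono (nth L) := Nat.nth_strictMono hL

theorem sort_mapSet (s : Finset ℕ) :
    (mapSet L s).sort (· ≤ ·) = (s.sort (· ≤ ·)).map (nth L) := by
  have hinj := (nth_strictMono'' hL).injective
  have hval : (mapSet L s).1 = s.1.map (nth L) :=
    Finset.image_val_of_injOn hinj.injOn
  show Multiset.sort (mapSet L s).1 (· ≤ ·) = ((Multiset.sort s.1 (· ≤ ·)).map (nth L))
  rw [hval]
  exact (Multiset.map_sort (r := (· ≤ ·)) (r' := (· ≤ ·)) (f := nth L) (s := s.1)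
    (fun a _ b _ => ((nth_strictMono'' hL).le_iff_le).symm)).symm

theorem card_mapSet (s : Finset ℕ) : (mapSet L s).card = s.card :=
  Finset.card_image_of_injective s (nth_strictMono'' hL).injective

theorem elt_mapSet (s : Finset ℕ) {k : ℕ} (hk : k < s.card) :
    elt (mapSet L s) k = nth L (elt s k) := by
  have hlen : k < (s.sort (· ≤ ·)).length := by rwa [Finset.length_sort]
  have hlen' : k < ((s.sort (· ≤ ·)).map (nth L)).length := by simpa using hlen
  rw [elt, elt, sort_mapSet hL, List.getD_eq_getElem _ _ hlen', List.getD_eq_getElem _ _ hlen,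
    List.getElem_map]

theorem initSeg_mapSet {t s : Finset ℕ} (h : InitSeg t s) :
    InitSeg (mapSet L t) (mapSet L s) := by
  constructor
  · exact Finset.image_subset_image h.1
  · rintro a ha b hb hab
    simp only [mapSet, Finset.mem_image] at ha hb ⊢
    obtain ⟨a', ha', rfl⟩ := ha
    obtain ⟨b', hb', rfl⟩ := hb
    exact ⟨a', h.2 a' ha' b' hb' (((nth_strictMono'' hL).le_iff_le).mp hab), rfl⟩

theorem properInitSeg_mapSet {t s : Finset ℕ} (h : ProperInitSeg t s) :
    ProperInitSeg (mapSet L t) (mapSet L s) :=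
  ⟨initSeg_mapSet hL h.1,
    fun he => h.2 (Finset.image_injective (nth_strictMono'' hL).injective he)⟩

theorem mapSet_mem_restrict {R : Set (Finset ℕ)} (hspr : Spreading R) {s : Finset ℕ}
    (hs : s ∈ R) : mapSet L s ∈ restrict R L := by
  constructor
  · refine hspr s hs _ (card_mapSet hL s) fun k hk => ?_
    rw [elt_mapSet hL s hk]
    exact ((nth_strictMono'' hL).le_apply)
  · intro x hx
    simp only [Finset.coe_image, mapSet, Set.mem_image, Finset.mem_coe] at hx
    obtain ⟨k, -, rfl⟩ := hx
    exact Nat.nth_mem_of_infinite hL k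

omit hL in theorem hat_eq_self {F : Set (Finset ℕ)} (hF : Hereditary F) : hat F = F := by
  ext t
  constructor
  · rintro ⟨s, hs, hts⟩
    exact hF s hs t hts.1
  · intro ht
    exact ⟨t, ht, Finset.Subset.refl t, fun a ha _ _ _ => ha⟩

omit hL in theorem hereditary_restrict {F : Set (Finset ℕ)} (hF : Hereditary F) :
    Hereditary (restrict F L) := fun s hs t hts =>
  ⟨hF s hs.1 t hts, fun x hx => hs.2 (hts hx)⟩

end Comb

/-- If `R` is a regular family of finite subsets of `ℕ`, then for every
infinite `L ⊆ ℕ` the order of `R↾L` equals the order of `R`. -/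
theorem famOrder_restrict_eq (R : Set (Finset ℕ)) (hR : RegularFam R) :
    ∀ L : Set ℕ, L.Infinite → famOrder (restrict R L) = famOrder R := by
  intro L hL
  obtain ⟨-, hher, hspr⟩ := hR
  have hhatR : hat R = R := hat_eq_self hher
  have hherL : Hereditary (restrict R L) := hereditary_restrict hher
  have hhatL : hat (restrict R L) = restrict R L := hat_eq_self hherL
  have mA : ∀ t s, extRel (restrict R L) t s → extRel R t s := by
    rintro t s ⟨ht, hst⟩
    rw [hhatL] at ht
    exact ⟨by rw [hhatR]; exact ht.1, hst⟩
  have mB : ∀ t s, extRel R t s → extRel (restrict R L) (mapSet L t) (mapSet L s) := by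
    rintro t s ⟨ht, hst⟩
    rw [hhatR] at ht
    exact ⟨by rw [hhatL]; exact mapSet_mem_restrict hL hspr ht, properInitSeg_mapSet hL hst⟩
  have hme : mapSet L (∅ : Finset ℕ) = ∅ := Finset.image_empty _
  by_cases h : Acc (extRel R) (∅ : Finset ℕ)
  · have h' : Acc (extRel (restrict R L)) (∅ : Finset ℕ) :=
      acc_of_map (f := id) mA h
    have h'' : Acc (extRel (restrict R L)) (mapSet L ∅) := by rw [hme]; exact h'
    unfold famOrder
    rw [dif_pos h, dif_pos h']
    refine le_antisymm (rank_le_of_map (f := id) mA h' rfl h) ?_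
    exact rank_le_of_map mB h hme h'
  · have h' : ¬ Acc (extRel (restrict R L)) (∅ : Finset ℕ) := by
      intro h'
      have h'' : Acc (extRel (restrict R L)) (mapSet L ∅) := by rw [hme]; exact h'
      exact h (acc_of_map mB h'')
    unfold famOrder
    rw [dif_neg h, dif_neg h']
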